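/- Let M = R/m₁ ⊕ ... ⊕ R/mₙ where m₁,...,mₙ are maximal ideals of R. Then M satisfies the dual of proper strong Property A if and only if either {m₁,...,mₙ} is the full set of maximal ideals of R, or m₁ = m₂ = ... = mₙ. -/

import Mathlib

open Pointwise

section aux
variable {R : Type*} [CommRing R]

lemma aux_quot_smul_top (I J : Ideal R) (hJ : J.IsMaximal) :
    I • (⊤ : Submodule R (R ⧸ J)) = ⊤ ↔ ¬ I ≤ J := by
  have h1 : I • (⊤ : Submodule R (R ⧸ J)) = Submodule.map J.mkQ I := by
    have := Submodule.map_smul'' I (⊤ : Ideal R) J.mkQ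
    rw [Submodule.map_top, Submodule.range_mkQ, smul_eq_mul, Ideal.mul_top] at this
    exact this.symm
  rw [h1, Submodule.map_mkQ_eq_top]
  constructor
  · intro h hle
    rw [sup_eq_left.2 hle] at h
    exact hJ.ne_top h
  · intro h
    by_contra hne
    have : J ⊔ I ≠ J := fun he => h (le_sup_right.trans he.le)
    exact hne (hJ.1.2 _ (lt_of_le_of_ne le_sup_left (Ne.symm this)))
end aux

section pi
variable {R : Type*} [CommRing R] {n : ℕ} (m : Fin n → Ideal R)

lemma aux_pi_smul_top (I : Ideal R) :
    I • (⊤ : Submodule R (Π i : Fin n, R ⧸ m i)) = ⊤ ↔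
      ∀ i, I • (⊤ : Submodule R (R ⧸ m i)) = ⊤ := by
  constructor
  · intro h i
    have hsurj : Function.Surjective (LinearMap.proj (R := R) (φ := fun i => R ⧸ m i) i) :=
      fun x => ⟨Pi.single i x, by simp⟩
    have := Submodule.map_smul'' I (⊤ : Submodule R (Π i : Fin n, R ⧸ m i))
      (LinearMap.proj (R := R) (φ := fun i => R ⧸ m i) i)
    rw [h, Submodule.map_top, LinearMap.range_eq_top.2 hsurj] at this
    exact this.symm
  · intro h
    rw [eq_top_iff]
    intro x _
    have : x = ∑ i, Pi.single i (x i) := (Finset.univ_sum_single x).symm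
    rw [this]
    refine Submodule.sum_mem _ fun i _ => ?_
    have hx : x i ∈ I • (⊤ : Submodule R (R ⧸ m i)) := (h i).symm ▸ Submodule.mem_top
    have : Pi.single i (x i) ∈
        Submodule.map (LinearMap.single R (fun i => R ⧸ m i) i)
          (I • (⊤ : Submodule R (R ⧸ m i))) := ⟨x i, hx, rfl⟩
    rw [Submodule.map_smul''] at this
    exact (smul_mono_right I le_top : I • _ ≤ I • (⊤ : Submodule R (Π i : Fin n, R ⧸ m i))) this

lemma aux_smul_top_ne (hm : ∀ i, (m i).IsMaximal) (I : Ideal R) :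
    I • (⊤ : Submodule R (Π i : Fin n, R ⧸ m i)) ≠ ⊤ ↔ ∃ i, I ≤ m i := by
  rw [Ne, aux_pi_smul_top]
  push_neg
  constructor
  · rintro ⟨i, hi⟩
    exact ⟨i, not_not.1 fun h => hi ((aux_quot_smul_top I (m i) (hm i)).2 h)⟩
  · rintro ⟨i, hi⟩
    exact ⟨i, fun h => (aux_quot_smul_top I (m i) (hm i)).1 h hi⟩
end pi

theorem stmt18 {R : Type*} [CommRing R] {n : ℕ} (hn : 0 < n)
    (m : Fin n → Ideal R) (hm : ∀ i, (m i).IsMaximal) :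
    (∀ (k : ℕ) (a : Fin k → R),
        (∀ j, a j • (⊤ : Submodule R (Π i : Fin n, R ⧸ m i)) ≠ ⊤) →
        Ideal.span (Set.range a) ≠ ⊤ →
        Ideal.span (Set.range a) • (⊤ : Submodule R (Π i : Fin n, R ⧸ m i)) ≠ ⊤) ↔
      ((∀ p : Ideal R, p.IsMaximal → ∃ i, p = m i) ∨ ∀ i j, m i = m j) := by
  have hsingle : ∀ r : R, r • (⊤ : Submodule R (Π i : Fin n, R ⧸ m i)) =
      Ideal.span {r} • (⊤ : Submodule R (Π i : Fin n, R ⧸ m i)) :=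
    fun r => (Submodule.ideal_span_singleton_smul r _).symm
  constructor
  · intro H
    by_contra hcon
    push_neg at hcon
    obtain ⟨⟨p, hp, hpne⟩, i0, j0, hij⟩ := hcon
    -- for each k, pick l with m l ≠ m k
    have hl : ∀ k : Fin n, ∃ l, m l ≠ m k := by
      intro k
      by_cases hk : m k = m i0
      · exact ⟨j0, fun h => hij (h.trans hk).symm⟩
      · exact ⟨i0, fun h => hk h.symm⟩
    choose l hlne using hl
    have hb : ∀ k : Fin n, ∃ b, b ∈ p ⊓ m (l k) ∧ b ∉ m k := by
      intro k
      by_contra hno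
      push_neg at hno
      have hle : p ⊓ m (l k) ≤ m k := fun x hx => hno x hx
      rcases ((hm k).isPrime.inf_le).1 hle with h | h
      · exact hpne k ((hp.eq_of_le (hm k).ne_top h))
      · exact hlne k ((hm (l k)).eq_of_le (hm k).ne_top h)
    choose b hb1 hb2 using hb
    have h1 : ∀ j, b j • (⊤ : Submodule R (Π i : Fin n, R ⧸ m i)) ≠ ⊤ := by
      intro j
      rw [hsingle]
      exact (aux_smul_top_ne m hm _).2 ⟨l j, (Ideal.span_singleton_le_iff_mem _).2 (hb1 j).2⟩
    have hspan : Ideal.span (Set.range b) ≤ p := by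
      rw [Ideal.span_le]
      rintro x ⟨j, rfl⟩
      exact (hb1 j).1
    have h2 : Ideal.span (Set.range b) ≠ ⊤ := fun h => hp.ne_top (top_le_iff.1 (h ▸ hspan))
    have := H n b h1 h2
    rw [Ne, ← Ne] at this
    obtain ⟨i, hi⟩ := (aux_smul_top_ne m hm _).1 this
    exact hb2 i (hi (Ideal.subset_span ⟨i, rfl⟩))
  · intro H k a ha hne
    rcases H with H | H
    · obtain ⟨p, hp, hle⟩ := Ideal.exists_le_maximal _ hne
      obtain ⟨i, rfl⟩ := H p hp
      exact (aux_smul_top_ne m hm _).2 ⟨i, hle⟩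
    · have i0 : Fin n := ⟨0, hn⟩
      refine (aux_smul_top_ne m hm _).2 ⟨i0, ?_⟩
      rw [Ideal.span_le]
      rintro x ⟨j, rfl⟩
      have := ha j
      rw [hsingle] at this
      obtain ⟨i, hi⟩ := (aux_smul_top_ne m hm _).1 this
      exact (H i i0) ▸ (Ideal.span_singleton_le_iff_mem _).1 hi
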